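/- Let p be a prime and let m, r be coprime positive integers with r < m such that the multiplicative order of r modulo m equals p. Then every group homomorphism ρ : G_{m,r} → GL(p,ℂ) that is reducible — i.e., for which there exists a complex subspace W of ℂ^p with 0 < dim W < p and ρ(g)·W = W for all g ∈ G_{m,r} — fails to be injective. -/

import Mathlib

open Matrix

/-- The defining relations of Amitsur's `D`-group `G_{m,r}`:
`X^m = 1`, `Y^n = X^t` and `Y X Y⁻¹ = X^r`, where `s = gcd(r-1, m)`, `t = m/s` and `n` is the
multiplicative order of `r` modulo `m`.  Here `X` and `Y` are the generators `0` and `1`. -/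
def GmrRels (m r : ℕ) : Set (FreeGroup (Fin 2)) :=
  { FreeGroup.of 0 ^ m,
    FreeGroup.of 1 ^ orderOf ((r : ZMod m)) * (FreeGroup.of 0 ^ (m / Nat.gcd (r - 1) m))⁻¹,
    FreeGroup.of 1 * FreeGroup.of 0 * (FreeGroup.of 1)⁻¹ * (FreeGroup.of 0 ^ r)⁻¹ }

/-- Amitsur's `D`-group `G_{m,r}`, given by the presentation
`⟨X, Y ∣ X^m = 1, Y^n = X^t, Y X Y⁻¹ = X^r⟩`. -/
abbrev Gmr (m r : ℕ) : Type := PresentedGroup (GmrRels m r)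

/-! ### Auxiliary lemmas -/

lemma pow_congr_of_pow_eq_one {M : Type*} [Monoid M] {x : M} {p : ℕ} (hx : x ^ p = 1)
    {a b : ℕ} (hab : a ≡ b [MOD p]) : x ^ a = x ^ b := by
  have h : a % orderOf x = b % orderOf x := hab.of_dvd (orderOf_dvd_of_pow_eq_one hx)
  rw [← pow_mod_orderOf, h, pow_mod_orderOf]

/-! ### The key linear-algebra lemma -/

section KeyLemma

open Polynomial

/-- If `f` has finite order dividing `m`, is conjugate (by a unit `bu`) to `f ^ r`, where `r`
has order dividing a prime `p` mod `m` (but `r ≢ 1`), and the space has dimension `< p`,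
then `f ^ r = f`. -/
lemma pow_r_eq_self_of_small_dim {V : Type*} [AddCommGroup V] [Module ℂ V]
    [FiniteDimensional ℂ V]
    {p m r : ℕ} (hp : p.Prime) (hm : 0 < m) (h2 : 2 ≤ r) (hcop : Nat.Coprime m r)
    (hrp : ((r : ZMod m)) ^ p = 1)
    (hdim : Module.finrank ℂ V < p)
    (f : Module.End ℂ V) (bu : (Module.End ℂ V)ˣ)
    (hf : f ^ m = 1) (hcomm : (bu : Module.End ℂ V) * f = f ^ r * bu) :
    f ^ r = f := by
  rcases subsingleton_or_nontrivial V with hV | hV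
  · exact LinearMap.ext fun v => Subsingleton.elim _ _
  have hfb : f * ((bu⁻¹ : (Module.End ℂ V)ˣ) : Module.End ℂ V)
      = ((bu⁻¹ : (Module.End ℂ V)ˣ) : Module.End ℂ V) * f ^ r := by
    calc f * ((bu⁻¹ : (Module.End ℂ V)ˣ) : Module.End ℂ V)
        = ((bu⁻¹ : (Module.End ℂ V)ˣ) : Module.End ℂ V) * ((bu : Module.End ℂ V) * f) *
            ((bu⁻¹ : (Module.End ℂ V)ˣ) : Module.End ℂ V) := by
          rw [← mul_assoc, Units.inv_mul, one_mul]
      _ = ((bu⁻¹ : (Module.End ℂ V)ˣ) : Module.End ℂ V) * f ^ r *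
            ((bu : Module.End ℂ V) * ((bu⁻¹ : (Module.End ℂ V)ˣ) : Module.End ℂ V)) := by
          rw [hcomm]; noncomm_ring
      _ = ((bu⁻¹ : (Module.End ℂ V)ˣ) : Module.End ℂ V) * f ^ r := by
          rw [Units.mul_inv, mul_one]
  -- eigenvalues are closed under `r`-th power
  have step : ∀ μ : ℂ, f.HasEigenvalue μ → f.HasEigenvalue (μ ^ r) := by
    intro μ hμ
    obtain ⟨v, hv⟩ := hμ.exists_hasEigenvector
    set w := ((bu⁻¹ : (Module.End ℂ V)ˣ) : Module.End ℂ V) v with hw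
    have hwne : w ≠ 0 := by
      intro h0
      apply hv.2
      have h1 : ((bu : Module.End ℂ V) * ((bu⁻¹ : (Module.End ℂ V)ˣ) : Module.End ℂ V)) v
          = (bu : Module.End ℂ V) w := by rw [Module.End.mul_apply, hw]
      rw [Units.mul_inv, h0, map_zero] at h1
      simpa using h1
    have hfw : f w = (μ ^ r) • w := by
      have h1 : f w = (f * ((bu⁻¹ : (Module.End ℂ V)ˣ) : Module.End ℂ V)) v := rfl
      rw [hfb] at h1
      rw [h1, Module.End.mul_apply, hv.pow_apply]
      exact _root_.map_smul _ _ _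
    exact Module.End.hasEigenvalue_of_hasEigenvector
      ⟨Module.End.mem_eigenspace_iff.mpr hfw, hwne⟩
  -- eigenvalues are `m`-th roots of unity
  have eig_m : ∀ μ : ℂ, f.HasEigenvalue μ → μ ^ m = 1 := by
    intro μ hμ
    obtain ⟨v, hv⟩ := hμ.exists_hasEigenvector
    have h1 : (f ^ m) v = μ ^ m • v := hv.pow_apply m
    rw [hf] at h1
    have h2 : (μ ^ m - 1) • v = 0 := by
      rw [sub_smul, one_smul, ← h1]; simp
    rcases smul_eq_zero.mp h2 with h | h
    · exact sub_eq_zero.mp h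
    · exact absurd h hv.2
  -- every eigenvalue is fixed by the `r`-th power map
  have fixed : ∀ μ : ℂ, f.HasEigenvalue μ → μ ^ r = μ := by
    intro μ hμ
    have hμm : μ ^ m = 1 := eig_m μ hμ
    have hμu : IsUnit μ := IsUnit.of_pow_eq_one hμm hm.ne'
    obtain ⟨U, rfl⟩ := hμu
    set o := orderOf U with ho
    have hUm : U ^ m = 1 := by ext; push_cast; exact hμm
    have hom : o ∣ m := orderOf_dvd_of_pow_eq_one hUm
    have hco : r.Coprime o := (Nat.Coprime.coprime_dvd_left hom hcop).symm
    set R : (ZMod o)ˣ := ZMod.unitOfCoprime r hco with hR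
    have hRcoe : (R : ZMod o) = (r : ZMod o) := rfl
    have key : ∀ i j : ℕ, U ^ (r ^ i) = U ^ (r ^ j) ↔ R ^ i = R ^ j := by
      intro i j
      rw [pow_eq_pow_iff_modEq, ← ho, ← ZMod.natCast_eq_natCast_iff, Units.ext_iff]
      push_cast [hRcoe]
      rfl
    have hrpU : R ^ p = 1 := by
      have h1 : r ^ p ≡ 1 [MOD m] := by
        rw [← ZMod.natCast_eq_natCast_iff]
        push_cast
        rw [hrp]
      have h3 : r ^ p ≡ 1 [MOD o] := h1.of_dvd hom
      ext
      have h4 := (ZMod.natCast_eq_natCast_iff _ _ _).mpr h3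
      push_cast at h4 ⊢
      rw [hRcoe]
      exact h4
    have hep : orderOf R ∣ p := orderOf_dvd_of_pow_eq_one hrpU
    by_contra hne
    have hRne : R ≠ 1 := by
      intro hR1
      apply hne
      have h1 := (key 1 0).mpr (by rw [hR1]; simp)
      simp only [pow_one, pow_zero] at h1
      exact_mod_cast congrArg Units.val h1
    have heR : orderOf R = p := by
      rcases hp.eq_one_or_self_of_dvd _ hep with h1 | h1
      · exact absurd (orderOf_eq_one_iff.mp h1) hRne
      · exact h1
    -- we get `p` distinct eigenvalues, contradicting the dimension bound
    have hinj : Function.Injective (fun i : Fin p => ((U : ℂ) ^ (r ^ (i : ℕ)))) := by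
      intro i j hij
      have h1 : U ^ (r ^ (i : ℕ)) = U ^ (r ^ (j : ℕ)) := by
        ext; push_cast; exact hij
      have h2 : R ^ (i : ℕ) = R ^ (j : ℕ) := (key _ _).mp h1
      have h3 := pow_eq_pow_iff_modEq.mp h2
      rw [heR] at h3
      have h4 : (i : ℕ) % p = (j : ℕ) % p := h3
      rw [Nat.mod_eq_of_lt i.isLt, Nat.mod_eq_of_lt j.isLt] at h4
      exact Fin.ext h4
    have eigs_all : ∀ k : ℕ, f.HasEigenvalue ((U : ℂ) ^ (r ^ k)) := by
      intro k
      induction k with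
      | zero => simpa using hμ
      | succ k ih =>
        have h1 := step _ ih
        rw [← pow_mul, ← pow_succ] at h1
        exact h1
    choose vs hvs using fun i : Fin p => (eigs_all (i : ℕ)).exists_hasEigenvector
    have hli := Module.End.eigenvectors_linearIndependent' f
      (fun i : Fin p => (U : ℂ) ^ (r ^ (i : ℕ))) hinj vs hvs
    have hcard := hli.fintype_card_le_finrank
    rw [Fintype.card_fin] at hcard
    omega
  -- now conclude via the minimal polynomial
  have hint : IsIntegral ℂ f := Algebra.IsIntegral.isIntegral f
  set q := minpoly ℂ f with hqdef
  have haev : (Polynomial.aeval f) ((X : ℂ[X]) ^ m - 1) = 0 := by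
    simp [map_sub, map_pow, hf]
  have hqdvd : q ∣ (X : ℂ[X]) ^ m - 1 := minpoly.dvd ℂ f haev
  have hXm_sep : ((X : ℂ[X]) ^ m - 1).Separable := by
    have h1 := Polynomial.separable_X_pow_sub_C (1 : ℂ)
      (by exact_mod_cast Nat.cast_ne_zero.mpr hm.ne') one_ne_zero
    simpa using h1
  have hqsep : q.Separable := hXm_sep.of_dvd hqdvd
  have hq0 : q ≠ 0 := minpoly.ne_zero hint
  have hnodup : q.roots.Nodup := Polynomial.nodup_roots hqsep
  set P : ℂ[X] := (X : ℂ[X]) ^ r - X with hPdef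
  have hP0 : P ≠ 0 := by
    intro h
    have hc : P.coeff r = 0 := by rw [h]; simp
    rw [hPdef] at hc
    simp only [Polynomial.coeff_sub, Polynomial.coeff_X_pow, if_pos rfl, Polynomial.coeff_X] at hc
    rw [if_neg (by omega : ¬ (1 : ℕ) = r)] at hc
    norm_num at hc
  have hroots_le : q.roots ≤ P.roots := by
    rw [Multiset.le_iff_count]
    intro a
    by_cases ha : a ∈ q.roots
    · have h1 : Multiset.count a q.roots ≤ 1 := Multiset.nodup_iff_count_le_one.mp hnodup a
      have haroot : q.IsRoot a := (Polynomial.mem_roots'.mp ha).2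
      have heig : f.HasEigenvalue a := (Module.End.hasEigenvalue_iff_isRoot).mpr haroot
      have hfix : a ^ r = a := fixed a heig
      have hmem : a ∈ P.roots := by
        rw [Polynomial.mem_roots']
        refine ⟨hP0, ?_⟩
        simp [hPdef, Polynomial.IsRoot, hfix]
      have h2 : 1 ≤ Multiset.count a P.roots := Multiset.one_le_count_iff_mem.mpr hmem
      omega
    · simp [Multiset.count_eq_zero_of_notMem ha]
  have hqP : q ∣ P := by
    have h1 : (q.roots.map fun a => (X : ℂ[X]) - Polynomial.C a).prod ∣ P :=
      (Multiset.prod_X_sub_C_dvd_iff_le_roots hP0 q.roots).mpr hroots_le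
    rwa [← (IsAlgClosed.splits q).eq_prod_roots_of_monic (minpoly.monic hint)] at h1
  obtain ⟨c, hc⟩ := hqP
  have haevP : (Polynomial.aeval f) P = 0 := by
    rw [hc, _root_.map_mul]
    rw [hqdef] at *
    rw [minpoly.aeval, zero_mul]
  have h2 : f ^ r - f = 0 := by
    simpa [hPdef, map_sub, map_pow] using haevP
  exact sub_eq_zero.mp h2

end KeyLemma

/-! ### A model of `G_{m,r}` where `X` visibly has order `m` -/

section Model

/-- Shift automorphism of `ZMod p → ZMod m` by `k`. -/
def shiftAut (p m : ℕ) (k : ZMod p) : (ZMod p → ZMod m) ≃+ (ZMod p → ZMod m) where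
  toFun v := fun i => v (i + k)
  invFun v := fun i => v (i - k)
  left_inv v := funext fun i => by simp
  right_inv v := funext fun i => by simp
  map_add' v w := rfl

/-- The shift action of `ZMod p` on `ZMod p → ZMod m`, as a `MulAut` on `Multiplicative`. -/
def shiftHom (p m : ℕ) :
    Multiplicative (ZMod p) →* MulAut (Multiplicative (ZMod p → ZMod m)) where
  toFun k := AddEquiv.toMultiplicative (shiftAut p m k.toAdd)
  map_one' := by
    apply MulEquiv.ext
    intro v
    show Multiplicative.ofAdd (fun i => v.toAdd (i + (0 : ZMod p))) = v
    simp
  map_mul' k l := by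
    apply MulEquiv.ext
    intro v
    show Multiplicative.ofAdd (fun i => v.toAdd (i + ((k.toAdd : ZMod p) + l.toAdd))) =
      Multiplicative.ofAdd (fun i => v.toAdd (i + k.toAdd + l.toAdd))
    congr 1
    funext i
    rw [add_assoc]

/-- The model group: `(ZMod p → ZMod m) ⋊ ZMod p`. -/
abbrev ModelH (p m : ℕ) :=
  SemidirectProduct (Multiplicative (ZMod p → ZMod m)) (Multiplicative (ZMod p)) (shiftHom p m)

def wvec (p m r : ℕ) : ZMod p → ZMod m := fun i => (r : ZMod m) ^ i.val

def uvec (p m r : ℕ) : ZMod p → ZMod m :=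
  fun i => if i = 0 then ((m / Nat.gcd (r - 1) m : ℕ) : ZMod m) else 0

def modelX (p m r : ℕ) : ModelH p m := SemidirectProduct.inl (Multiplicative.ofAdd (wvec p m r))

def modelY (p m r : ℕ) : ModelH p m :=
  ⟨Multiplicative.ofAdd (uvec p m r), Multiplicative.ofAdd 1⟩

lemma shiftHom_apply (p m : ℕ) (k : Multiplicative (ZMod p))
    (v : Multiplicative (ZMod p → ZMod m)) :
    (shiftHom p m k) v = Multiplicative.ofAdd (fun i => v.toAdd (i + k.toAdd)) := rfl

/-- power formula in a semidirect product with commutative kernel -/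
lemma sd_pow {N G : Type*} [CommGroup N] [Group G] {φ : G →* MulAut N} (n : N) (g : G) (j : ℕ) :
    (⟨n, g⟩ : N ⋊[φ] G) ^ j = ⟨∏ k ∈ Finset.range j, φ (g ^ k) n, g ^ j⟩ := by
  induction j with
  | zero => ext <;> simp
  | succ j ih =>
    rw [pow_succ, ih, SemidirectProduct.mul_def]
    ext
    · exact (Finset.prod_range_succ _ _).symm
    · exact (pow_succ _ _).symm

end Model

section ModelFacts

variable {p m r : ℕ}

lemma modelX_pow (p m r : ℕ) (n : ℕ) :
    (modelX p m r) ^ n = SemidirectProduct.inl (Multiplicative.ofAdd (n • wvec p m r)) := by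
  rw [modelX, ← _root_.map_pow, ← ofAdd_nsmul]

lemma wvec_m_smul (p m r : ℕ) : m • wvec p m r = 0 := by
  funext i
  show m • ((r : ZMod m) ^ i.val) = 0
  rw [nsmul_eq_mul, ZMod.natCast_self, zero_mul]

lemma wvec_shift (hp : p.Prime) (hrp : ((r : ZMod m)) ^ p = 1) :
    (fun i => wvec p m r (i + 1)) = r • wvec p m r := by
  haveI : NeZero p := ⟨hp.ne_zero⟩
  funext i
  show (r : ZMod m) ^ (i + 1).val = r • ((r : ZMod m) ^ i.val)
  have hval : ((i + 1 : ZMod p)).val ≡ i.val + 1 [MOD p] := by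
    rw [← ZMod.natCast_eq_natCast_iff]
    push_cast
    rw [ZMod.natCast_val, ZMod.natCast_val, ZMod.cast_id, ZMod.cast_id]
  rw [pow_congr_of_pow_eq_one hrp hval, nsmul_eq_mul, pow_succ]
  ring

lemma wvec_t_smul (h2 : 2 ≤ r) (hrm : r < m) :
    (m / Nat.gcd (r - 1) m) • wvec p m r
      = fun _ : ZMod p => ((m / Nat.gcd (r - 1) m : ℕ) : ZMod m) := by
  have key : ∀ j : ℕ, ((m / Nat.gcd (r - 1) m : ℕ) : ZMod m) * (r : ZMod m) ^ j
      = ((m / Nat.gcd (r - 1) m : ℕ) : ZMod m) := by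
    intro j
    induction j with
    | zero => simp
    | succ j ih =>
      rw [pow_succ, ← mul_assoc, ih]
      set g := Nat.gcd (r - 1) m with hg
      set t := m / g with ht
      set a := r - 1 with ha
      obtain ⟨k, hk⟩ : g ∣ a := Nat.gcd_dvd_left _ _
      have htg : t * g = m := Nat.div_mul_cancel (Nat.gcd_dvd_right (r - 1) m)
      have hra : r = a + 1 := by omega
      have hnat : t * r = m * k + t := by
        calc t * r = t * (a + 1) := by rw [hra]
          _ = t * a + t := by ring
          _ = t * (g * k) + t := by rw [hk]
          _ = (t * g) * k + t := by ring
          _ = m * k + t := by rw [htg]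
      have hcast := congrArg (fun z : ℕ => (z : ZMod m)) hnat
      push_cast at hcast
      simpa [ZMod.natCast_self] using hcast
  funext i
  show (m / Nat.gcd (r - 1) m) • ((r : ZMod m) ^ i.val) = _
  rw [nsmul_eq_mul]
  exact key i.val

lemma uvec_sum (hp : p.Prime) (i : ZMod p) :
    ∑ k ∈ Finset.range p, uvec p m r (i + (k : ZMod p))
      = ((m / Nat.gcd (r - 1) m : ℕ) : ZMod m) := by
  haveI : NeZero p := ⟨hp.ne_zero⟩
  rw [Finset.sum_eq_single ((-i).val)]
  · have h1 : (((-i).val : ℕ) : ZMod p) = -i := by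
      rw [ZMod.natCast_val, ZMod.cast_id]
    rw [h1]
    simp [uvec]
  · intro k hk hkne
    have hne : ¬ (i + (k : ZMod p) = 0) := by
      intro h0
      apply hkne
      have h1 : (k : ZMod p) = -i := eq_neg_of_add_eq_zero_right h0
      rw [← ZMod.val_cast_of_lt (Finset.mem_range.mp hk), h1]
    simp [uvec, hne]
  · intro hni
    exact absurd (Finset.mem_range.mpr (ZMod.val_lt _)) hni

/-- The generators of the model. -/
def modelF (p m r : ℕ) : Fin 2 → ModelH p m := ![modelX p m r, modelY p m r]

lemma model_rels (hp : p.Prime) (h2 : 2 ≤ r) (hrm : r < m)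
    (hord : orderOf ((r : ZMod m)) = p) :
    ∀ w ∈ GmrRels m r, FreeGroup.lift (modelF p m r) w = 1 := by
  haveI : NeZero p := ⟨hp.ne_zero⟩
  have hrp : (r : ZMod m) ^ p = 1 := by rw [← hord]; exact pow_orderOf_eq_one _
  have hX : FreeGroup.lift (modelF p m r) (FreeGroup.of 0) = modelX p m r := by
    simp [modelF]
  have hY : FreeGroup.lift (modelF p m r) (FreeGroup.of 1) = modelY p m r := by
    simp [modelF]
  -- `Y^p = X^t`
  have hYleft : (modelY p m r ^ p).left
      = Multiplicative.ofAdd (fun _ : ZMod p => ((m / Nat.gcd (r - 1) m : ℕ) : ZMod m)) := by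
    rw [modelY, sd_pow]
    show (∏ k ∈ Finset.range p, (shiftHom p m) ((Multiplicative.ofAdd (1 : ZMod p)) ^ k)
        (Multiplicative.ofAdd (uvec p m r))) = _
    have hfac : ∀ k : ℕ, (shiftHom p m) ((Multiplicative.ofAdd (1 : ZMod p)) ^ k)
        (Multiplicative.ofAdd (uvec p m r))
        = Multiplicative.ofAdd (fun i => uvec p m r (i + (k : ZMod p))) := by
      intro k
      rw [shiftHom_apply]
      have htoAdd : (Multiplicative.ofAdd (1 : ZMod p) ^ k).toAdd = (k : ZMod p) := by
        rw [toAdd_pow, toAdd_ofAdd, nsmul_eq_mul, mul_one]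
      rw [htoAdd]
      rfl
    rw [Finset.prod_congr rfl (fun k _ => hfac k), ← ofAdd_sum]
    congr 1
    funext i
    rw [Finset.sum_apply]
    exact uvec_sum hp i
  have hYright : (modelY p m r ^ p).right = 1 := by
    rw [modelY, sd_pow]
    show (Multiplicative.ofAdd (1 : ZMod p)) ^ p = 1
    rw [← ofAdd_nsmul]
    have hp1 : p • (1 : ZMod p) = 0 := by
      rw [nsmul_eq_mul, mul_one, ZMod.natCast_self]
    rw [hp1]
    rfl
  have hYp : modelY p m r ^ p = modelX p m r ^ (m / Nat.gcd (r - 1) m) := by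
    ext
    · rw [hYleft, modelX_pow, SemidirectProduct.left_inl, wvec_t_smul h2 hrm]
    · rw [hYright, modelX_pow, SemidirectProduct.right_inl]
  -- `Y X Y⁻¹ = X^r`
  have hconj : modelY p m r * modelX p m r * (modelY p m r)⁻¹ = modelX p m r ^ r := by
    rw [modelX_pow]
    ext
    · simp only [SemidirectProduct.mul_left, SemidirectProduct.inv_left,
        SemidirectProduct.mul_right, SemidirectProduct.inv_right, SemidirectProduct.left_inl,
        modelY, modelX, SemidirectProduct.right_inl, mul_one, map_inv]
      rw [MulAut.inv_def, MulEquiv.apply_symm_apply, mul_comm (Multiplicative.ofAdd (uvec p m r)),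
        mul_assoc, mul_inv_cancel, mul_one, shiftHom_apply]
      exact congrFun (wvec_shift hp hrp) _
    · simp [modelY, modelX]
  intro w hw
  simp only [GmrRels, Set.mem_insert_iff, Set.mem_singleton_iff] at hw
  rcases hw with rfl | rfl | rfl
  · rw [map_pow, hX, modelX_pow, wvec_m_smul]
    rfl
  · rw [_root_.map_mul, map_pow, map_inv, map_pow, hX, hY, hord, hYp, mul_inv_cancel]
  · rw [_root_.map_mul, _root_.map_mul, _root_.map_mul, map_inv, map_inv, map_pow, hX, hY]
    rw [← hconj]
    group

lemma gmr_xr_ne_x (hp : p.Prime) (h2 : 2 ≤ r) (hrm : r < m)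
    (hord : orderOf ((r : ZMod m)) = p) :
    (PresentedGroup.of (rels := GmrRels m r) 0) ^ r ≠ PresentedGroup.of 0 := by
  haveI : NeZero p := ⟨hp.ne_zero⟩
  intro hEq
  have h1 := congrArg (PresentedGroup.toGroup (f := modelF p m r) (model_rels hp h2 hrm hord)) hEq
  rw [map_pow, PresentedGroup.toGroup.of] at h1
  have h1' : modelX p m r ^ r = modelX p m r := by simpa [modelF] using h1
  rw [modelX_pow] at h1'
  have h3 := congrArg SemidirectProduct.left h1'
  rw [SemidirectProduct.left_inl, modelX, SemidirectProduct.left_inl] at h3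
  have h4 := congrFun (congrArg Multiplicative.toAdd h3) 0
  simp only [toAdd_ofAdd] at h4
  have h5 : (r : ZMod m) = ((1 : ℕ) : ZMod m) := by
    have hw0 : wvec p m r 0 = 1 := by
      show (r : ZMod m) ^ (0 : ZMod p).val = 1
      rw [ZMod.val_zero, pow_zero]
    rw [Pi.smul_apply, hw0, nsmul_eq_mul, mul_one] at h4
    simpa using h4
  rw [ZMod.natCast_eq_natCast_iff] at h5
  have h6 : r % m = 1 % m := h5
  rw [Nat.mod_eq_of_lt hrm, Nat.mod_eq_of_lt (by omega)] at h6
  omega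

end ModelFacts

/-! ### From `GL` to endomorphisms -/

/-- The natural monoid homomorphism `GL (Fin p) ℂ →* End ℂ (Fin p → ℂ)`. -/
def glToEnd (p : ℕ) : GL (Fin p) ℂ →* Module.End ℂ (Fin p → ℂ) where
  toFun A := Matrix.mulVecLin ((A : GL (Fin p) ℂ) : Matrix (Fin p) (Fin p) ℂ)
  map_one' := by
    show Matrix.mulVecLin ((1 : Matrix (Fin p) (Fin p) ℂ)) = 1
    rw [Matrix.mulVecLin_one]
    rfl
  map_mul' A B := by
    show Matrix.mulVecLin _ = _
    rw [Units.val_mul, Matrix.mulVecLin_mul]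
    rfl

lemma glToEnd_injective (p : ℕ) : Function.Injective (glToEnd p) := by
  intro A B h
  apply Units.ext
  have h2 : Matrix.toLin' ((A : GL (Fin p) ℂ) : Matrix (Fin p) (Fin p) ℂ)
      = Matrix.toLin' ((B : GL (Fin p) ℂ) : Matrix (Fin p) (Fin p) ℂ) := by
    rw [Matrix.toLin'_apply', Matrix.toLin'_apply']
    exact h
  exact Matrix.toLin'.injective h2

/-! ### Main theorem -/

/-- If the multiplicative order of `r` modulo `m` equals a prime `p`, then every reducible
representation `ρ : G_{m,r} → GL(p,ℂ)` (one preserving a subspace `W ≤ ℂ^p` with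
`0 < dim W < p`) fails to be injective. -/
theorem reducible_rep_of_Gmr_not_injective
    (p : ℕ) (hp : p.Prime) (m r : ℕ) (hr : 0 < r) (hrm : r < m)
    (hcop : Nat.Coprime m r) (hord : orderOf ((r : ZMod m)) = p)
    (ρ : Gmr m r →* GL (Fin p) ℂ)
    (hred : ∃ W : Submodule ℂ (Fin p → ℂ),
      0 < Module.finrank ℂ W ∧ Module.finrank ℂ W < p ∧
      ∀ g : Gmr m r, W.map (Matrix.mulVecLin ((ρ g : GL (Fin p) ℂ) : Matrix (Fin p) (Fin p) ℂ)) = W) :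
    ¬ Function.Injective ρ := by
  obtain ⟨W, hW0, hWp, hWinv⟩ := hred
  intro hinj
  have hm : 0 < m := by omega
  have h2 : 2 ≤ r := by
    by_contra h
    have hr1 : r = 1 := by omega
    rw [hr1, Nat.cast_one, orderOf_one] at hord
    exact hp.one_lt.ne' hord.symm
  have hrp : (r : ZMod m) ^ p = 1 := by rw [← hord]; exact pow_orderOf_eq_one _
  set x : Gmr m r := PresentedGroup.of 0 with hxdef
  set y : Gmr m r := PresentedGroup.of 1 with hydef
  -- the relations hold in `Gmr m r`
  let mkh : FreeGroup (Fin 2) →* Gmr m r :=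
    QuotientGroup.mk' (Subgroup.normalClosure (GmrRels m r))
  have hmkh0 : mkh (FreeGroup.of 0) = x := rfl
  have hmkh1 : mkh (FreeGroup.of 1) = y := rfl
  have hrel : ∀ w ∈ GmrRels m r, mkh w = 1 := by
    intro w hw
    exact (QuotientGroup.eq_one_iff w).mpr (Subgroup.subset_normalClosure hw)
  have hX1 : x ^ m = 1 := by
    have h := hrel _ (Set.mem_insert _ _)
    rwa [map_pow, hmkh0] at h
  have hYX : y ^ p = x ^ (m / Nat.gcd (r - 1) m) := by
    have h := hrel _ (Set.mem_insert_of_mem _ (Set.mem_insert _ _))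
    rw [_root_.map_mul, map_pow, map_inv, map_pow, hmkh0, hmkh1, hord] at h
    exact mul_inv_eq_one.mp h
  have hYXY : y * x * y⁻¹ = x ^ r := by
    have h := hrel _ (Set.mem_insert_of_mem _ (Set.mem_insert_of_mem _ rfl))
    rw [_root_.map_mul, _root_.map_mul, _root_.map_mul, map_inv, map_inv, map_pow,
      hmkh0, hmkh1] at h
    exact mul_inv_eq_one.mp h
  have hyx : y * x = x ^ r * y := by
    calc y * x = y * x * y⁻¹ * y := by group
      _ = x ^ r * y := by rw [hYXY]
  -- move to endomorphisms
  set μ : Gmr m r →* Module.End ℂ (Fin p → ℂ) := (glToEnd p).comp ρ with hμdef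
  have hWμ : ∀ g : Gmr m r, W.map (μ g) = W := fun g => hWinv g
  have hux1 : μ x * μ x⁻¹ = 1 := by rw [← _root_.map_mul, mul_inv_cancel, _root_.map_one]
  have hux2 : μ x⁻¹ * μ x = 1 := by rw [← _root_.map_mul, inv_mul_cancel, _root_.map_one]
  have huy1 : μ y * μ y⁻¹ = 1 := by rw [← _root_.map_mul, mul_inv_cancel, _root_.map_one]
  have huy2 : μ y⁻¹ * μ y = 1 := by rw [← _root_.map_mul, inv_mul_cancel, _root_.map_one]
  set a : Module.End ℂ (Fin p → ℂ) := μ x with hadef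
  set aI : Module.End ℂ (Fin p → ℂ) := μ x⁻¹ with haIdef
  set b : Module.End ℂ (Fin p → ℂ) := μ y with hbdef
  set bI : Module.End ℂ (Fin p → ℂ) := μ y⁻¹ with hbIdef
  have ham : a ^ m = 1 := by rw [hadef, ← map_pow, hX1, _root_.map_one]
  have hba : b * a = a ^ r * b := by
    rw [hadef, hbdef]
    simp only [← _root_.map_mul, ← map_pow]
    exact congrArg μ hyx
  have hinja : ∀ u w : Fin p → ℂ, a u = a w → u = w := by
    intro u w h
    have h1 : aI (a u) = aI (a w) := by rw [h]
    rwa [← Module.End.mul_apply, ← Module.End.mul_apply, hux2,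
      Module.End.one_apply, Module.End.one_apply] at h1
  -- stability of `W`
  have hWa : ∀ v ∈ W, a v ∈ W := by
    intro v hv
    have h1 : a v ∈ W.map (μ x) := Submodule.mem_map_of_mem hv
    rwa [hWμ x] at h1
  have hWb : ∀ v ∈ W, b v ∈ W := by
    intro v hv
    have h1 : b v ∈ W.map (μ y) := Submodule.mem_map_of_mem hv
    rwa [hWμ y] at h1
  have hWbI : ∀ v ∈ W, bI v ∈ W := by
    intro v hv
    have h1 : bI v ∈ W.map (μ y⁻¹) := Submodule.mem_map_of_mem hv
    rwa [hWμ y⁻¹] at h1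
  -- the restricted picture on `W`
  have hgW1 : (b.restrict hWb) * (bI.restrict hWbI) = 1 := by
    apply LinearMap.ext
    rintro ⟨v, hv⟩
    apply Subtype.ext
    simp only [Module.End.mul_apply, LinearMap.restrict_coe_apply, Module.End.one_apply]
    rw [← Module.End.mul_apply, huy1, Module.End.one_apply]
  have hgW2 : (bI.restrict hWbI) * (b.restrict hWb) = 1 := by
    apply LinearMap.ext
    rintro ⟨v, hv⟩
    apply Subtype.ext
    simp only [Module.End.mul_apply, LinearMap.restrict_coe_apply, Module.End.one_apply]
    rw [← Module.End.mul_apply, huy2, Module.End.one_apply]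
  let buW : (Module.End ℂ W)ˣ := ⟨b.restrict hWb, bI.restrict hWbI, hgW1, hgW2⟩
  have hfm : (a.restrict hWa) ^ m = 1 := by
    rw [Module.End.pow_restrict]
    apply LinearMap.ext
    rintro ⟨v, hv⟩
    apply Subtype.ext
    simp only [LinearMap.restrict_coe_apply, Module.End.one_apply]
    rw [ham, Module.End.one_apply]
  have hcommW : (buW : Module.End ℂ W) * (a.restrict hWa)
      = (a.restrict hWa) ^ r * buW := by
    rw [Module.End.pow_restrict]
    apply LinearMap.ext
    rintro ⟨v, hv⟩
    apply Subtype.ext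
    simp only [Module.End.mul_apply, LinearMap.restrict_coe_apply]
    exact LinearMap.congr_fun hba v
  have hfrW : (a.restrict hWa) ^ r = a.restrict hWa :=
    pow_r_eq_self_of_small_dim hp hm h2 hcop hrp hWp _ buW hfm hcommW
  have haW : ∀ v ∈ W, (a ^ r) v = a v := by
    intro v hv
    have h1 : (a ^ r).restrict (Module.End.pow_apply_mem_of_forall_mem r hWa)
        = a.restrict hWa := by
      rw [← Module.End.pow_restrict]
      exact hfrW
    have h2 := congrArg Subtype.val (LinearMap.congr_fun h1 ⟨v, hv⟩)
    simpa only [LinearMap.restrict_coe_apply] using h2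
  -- the quotient picture
  have hWa' : W ≤ W.comap a := fun v hv => hWa v hv
  have hWb' : W ≤ W.comap b := fun v hv => hWb v hv
  have hWbI' : W ≤ W.comap bI := fun v hv => hWbI v hv
  have hgQ1 : (Submodule.mapQ W W b hWb') * (Submodule.mapQ W W bI hWbI') = 1 := by
    apply LinearMap.ext
    intro z
    obtain ⟨v, rfl⟩ := Submodule.Quotient.mk_surjective W z
    simp only [Module.End.mul_apply, Submodule.mapQ_apply, Module.End.one_apply]
    exact congrArg _ (by rw [← Module.End.mul_apply, huy1, Module.End.one_apply])
  have hgQ2 : (Submodule.mapQ W W bI hWbI') * (Submodule.mapQ W W b hWb') = 1 := by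
    apply LinearMap.ext
    intro z
    obtain ⟨v, rfl⟩ := Submodule.Quotient.mk_surjective W z
    simp only [Module.End.mul_apply, Submodule.mapQ_apply, Module.End.one_apply]
    exact congrArg _ (by rw [← Module.End.mul_apply, huy2, Module.End.one_apply])
  let buQ : (Module.End ℂ ((Fin p → ℂ) ⧸ W))ˣ :=
    ⟨Submodule.mapQ W W b hWb', Submodule.mapQ W W bI hWbI', hgQ1, hgQ2⟩
  have hfQm : (Submodule.mapQ W W a hWa') ^ m = 1 := by
    rw [← Submodule.mapQ_pow]
    apply LinearMap.ext
    intro z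
    obtain ⟨v, rfl⟩ := Submodule.Quotient.mk_surjective W z
    rw [Submodule.mapQ_apply, ham]
    rfl
  have hcommQ : (buQ : Module.End ℂ ((Fin p → ℂ) ⧸ W)) * (Submodule.mapQ W W a hWa')
      = (Submodule.mapQ W W a hWa') ^ r * buQ := by
    rw [← Submodule.mapQ_pow]
    apply LinearMap.ext
    intro z
    obtain ⟨v, rfl⟩ := Submodule.Quotient.mk_surjective W z
    simp only [Module.End.mul_apply, Submodule.mapQ_apply]
    exact congrArg (Submodule.Quotient.mk (p := W)) (LinearMap.congr_fun hba v)
  have hdimQ : Module.finrank ℂ ((Fin p → ℂ) ⧸ W) < p := by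
    have h1 := Submodule.finrank_quotient_add_finrank W
    have h2 : Module.finrank ℂ (Fin p → ℂ) = p := by
      rw [Module.finrank_pi]
      exact Fintype.card_fin p
    omega
  have hfrQ : (Submodule.mapQ W W a hWa') ^ r = Submodule.mapQ W W a hWa' :=
    pow_r_eq_self_of_small_dim hp hm h2 hcop hrp hdimQ _ buQ hfQm hcommQ
  have haQ : ∀ v : Fin p → ℂ, (a ^ r) v - a v ∈ W := by
    intro v
    have h1 : Submodule.mapQ W W (a ^ r) (Submodule.le_comap_pow_of_le_comap W hWa' r)
        = Submodule.mapQ W W a hWa' := by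
      rw [Submodule.mapQ_pow]
      exact hfrQ
    have h2 := LinearMap.congr_fun h1 (Submodule.Quotient.mk v)
    rw [Submodule.mapQ_apply, Submodule.mapQ_apply] at h2
    exact (Submodule.Quotient.eq W).mp h2
  -- the binomial argument: `a ^ (r - 1) = 1`
  have hr1 : (r - 1) + 1 = r := by omega
  have hcva : ∀ v ∈ W, (a ^ (r - 1)) v = v := by
    intro v hv
    have h1 : a ((a ^ (r - 1)) v) = a v := by
      have h2 : (a ^ r) v = a v := haW v hv
      rw [← hr1, pow_succ', Module.End.mul_apply] at h2
      exact h2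
    exact hinja _ _ h1
  have hcWmem : ∀ v, (a ^ (r - 1)) v - v ∈ W := by
    intro v
    have h1 : a ((a ^ (r - 1)) v - v) ∈ W := by
      rw [map_sub, ← Module.End.mul_apply, ← pow_succ', hr1]
      exact haQ v
    rw [← hWμ x] at h1
    obtain ⟨u, hu, huv⟩ := Submodule.mem_map.mp h1
    have h3 : u = (a ^ (r - 1)) v - v := hinja _ _ huv
    rwa [h3] at hu
  have hN2 : ((a ^ (r - 1)) - 1) * ((a ^ (r - 1)) - 1) = 0 := by
    apply LinearMap.ext
    intro v
    simp only [Module.End.mul_apply, LinearMap.sub_apply, Module.End.one_apply,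
      LinearMap.zero_apply]
    rw [hcva _ (hcWmem v)]
    simp
  have hbin : ∀ j : ℕ, (1 + ((a ^ (r - 1)) - 1)) ^ j = 1 + j • ((a ^ (r - 1)) - 1) := by
    intro j
    induction j with
    | zero => simp
    | succ j ih =>
      rw [pow_succ, ih, mul_add, mul_one, add_mul, one_mul, smul_mul_assoc, hN2,
        smul_zero, add_zero, succ_nsmul]
      abel
  have hcm : (a ^ (r - 1)) ^ m = 1 := by
    rw [← pow_mul, mul_comm, pow_mul, ham, one_pow]
  have h0 : (1 : Module.End ℂ (Fin p → ℂ)) + ((a ^ (r - 1)) - 1) = a ^ (r - 1) := by abel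
  have hEq1 : (1 : Module.End ℂ (Fin p → ℂ)) = 1 + m • ((a ^ (r - 1)) - 1) := by
    rw [← hbin m, h0]
    exact hcm.symm
  have hmN : m • ((a ^ (r - 1)) - 1) = 0 := (left_eq_add.mp hEq1)
  have hNzero : (a ^ (r - 1)) - 1 = 0 := by
    have h1 : (m : ℂ) • ((a ^ (r - 1)) - 1) = 0 := by
      rw [Nat.cast_smul_eq_nsmul]
      exact hmN
    rcases smul_eq_zero.mp h1 with h | h
    · exact absurd h (by exact_mod_cast hm.ne')
    · exact h
  have hc1 : a ^ (r - 1) = 1 := sub_eq_zero.mp hNzero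
  have har : a ^ r = a := by
    rw [← hr1, pow_succ', hc1, mul_one]
  -- conclude
  have hρ : ρ (x ^ r) = ρ x := by
    apply glToEnd_injective p
    show μ (x ^ r) = μ x
    rw [map_pow]
    exact har
  exact gmr_xr_ne_x hp h2 hrm hord (hinj hρ)
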